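/- (Marcinkiewicz interpolation, discrete form) Let T be a finite set and let S be a linear map from functions f : T → ℝ^d to functions Sf : T → ℝ^d. Suppose there are constants c₁, c₂ such that for all f and all t > 0: #{x : |Sf(x)| > t} ≤ c₁·(Σ_x |f(x)|)/t and #{x : |Sf(x)| > t} ≤ c₂·(Σ_x |f(x)|²)/t². Then for every q with 1 < q < 2 there is a constant β(q, c₁, c₂) independent of T and f such that Σ_x |Sf(x)|^q ≤ β·Σ_x |f(x)|^q. -/

import Mathlib

open Finset

open MeasureTheory Set in
lemma my_integrableOn_rpow_Ioo (p a : ℝ) (hp : -1 < p) :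
    IntegrableOn (fun t : ℝ => t ^ p) (Set.Ioo 0 a) := by
  rcases le_or_gt 0 a with h | h
  · exact ((intervalIntegrable_iff_integrableOn_Ioc_of_le h).mp
      (intervalIntegral.intervalIntegrable_rpow' hp)).mono_set Set.Ioo_subset_Ioc_self
  · rw [Set.Ioo_eq_empty (by linarith)]; exact integrableOn_empty

open MeasureTheory Set in
lemma my_integral_rpow_Ioo (p a : ℝ) (hp : -1 < p) (ha : 0 ≤ a) :
    ∫ t in Set.Ioo 0 a, t ^ p = a ^ (p + 1) / (p + 1) := by
  rw [← MeasureTheory.integral_Ioc_eq_integral_Ioo, ← intervalIntegral.integral_of_le ha,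
    integral_rpow (Or.inl hp), Real.zero_rpow (by linarith)]
  ring

open MeasureTheory Set in
lemma my_indicator_int {s : Set ℝ} (hs : MeasurableSet s) (hsub : s ⊆ Set.Ioi 0) (g : ℝ → ℝ)
    (hg : IntegrableOn g s) :
    IntegrableOn (s.indicator g) (Set.Ioi 0) ∧
      ∫ t in Set.Ioi 0, s.indicator g t = ∫ t in s, g t := by
  constructor
  · exact (hg.integrable_indicator hs).integrableOn
  · rw [MeasureTheory.integral_indicator hs, MeasureTheory.Measure.restrict_restrict hs,
      Set.inter_eq_self_of_subset_left hsub]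

/-- discrete Marcinkiewicz interpolation: weak-type `(1,1)` and
`(2,2)` bounds for a linear operator `S` on functions on a finite set imply the
strong type `(q,q)` bound for every `1 < q < 2`, with a constant depending only
on `q, c₁, c₂` (in particular independent of the finite set and of `f`). -/
theorem stmt_10 (c₁ c₂ : ℝ) (q : ℝ) (hq1 : 1 < q) (hq2 : q < 2) :
    ∃ β : ℝ, ∀ (T : Type) (_ : Fintype T)
      (V : Type) (_ : NormedAddCommGroup V) (_ : NormedSpace ℝ V)
      (S : (T → V) →ₗ[ℝ] (T → V)),
      (∀ (f : T → V) (t : ℝ), 0 < t →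
        (Nat.card {x : T | t < ‖S f x‖} : ℝ) ≤ c₁ * (∑ x : T, ‖f x‖) / t) →
      (∀ (f : T → V) (t : ℝ), 0 < t →
        (Nat.card {x : T | t < ‖S f x‖} : ℝ) ≤ c₂ * (∑ x : T, ‖f x‖ ^ 2) / t ^ 2) →
      ∀ f : T → V, ∑ x : T, ‖S f x‖ ^ q ≤ β * ∑ x : T, ‖f x‖ ^ q := by
  have hq0 : (0:ℝ) < q := by linarith
  have hq1' : q - 1 ≠ 0 := by intro h; nlinarith
  have hq2' : q - 2 ≠ 0 := by intro h; nlinarith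
  refine ⟨q * (2*c₁/(q-1) + 4*c₂/(2-q)), ?_⟩
  intro T _ V _ _ S h1 h2 f
  classical
  -- layer functions
  set ψ : T → ℝ → ℝ := fun x t => (Set.Ioo 0 ‖S f x‖).indicator (fun t => t ^ (q-1)) t with hψ
  set φ : T → ℝ → ℝ := fun x t =>
      (Set.Ioo 0 ‖f x‖).indicator (fun t => (2*c₁*‖f x‖) * t ^ (q-2)) t
    + (Set.Ici ‖f x‖ ∩ Set.Ioi 0).indicator (fun t => (4*c₂*‖f x‖^2) * t ^ (q-3)) t with hφ
  -- ψ integrability and value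
  have hψint : ∀ x : T, MeasureTheory.IntegrableOn (ψ x) (Set.Ioi 0) ∧
      ∫ t in Set.Ioi 0, ψ x t = ‖S f x‖ ^ q / q := by
    intro x
    have h := my_indicator_int measurableSet_Ioo (fun t ht => ht.1) (fun t => t ^ (q-1))
      (my_integrableOn_rpow_Ioo (q-1) ‖S f x‖ (by linarith))
    refine ⟨h.1, ?_⟩
    rw [h.2, my_integral_rpow_Ioo (q-1) _ (by linarith) (norm_nonneg _)]
    norm_num
  -- φ integrability and value
  have hφint : ∀ x : T, MeasureTheory.IntegrableOn (φ x) (Set.Ioi 0) ∧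
      ∫ t in Set.Ioi 0, φ x t = (2*c₁/(q-1) + 4*c₂/(2-q)) * ‖f x‖ ^ q := by
    intro x
    set a := ‖f x‖ with ha
    have han : (0:ℝ) ≤ a := norm_nonneg _
    have h2q : (2:ℝ) - q ≠ 0 := by intro h; apply hq2'; linarith
    rcases eq_or_lt_of_le han with h0 | h0
    · -- a = 0 : everything vanishes
      have e1 : Set.Ioo (0:ℝ) a = ∅ := by rw [← h0]; exact Set.Ioo_self 0
      have e2 : (fun t : ℝ => (4*c₂*a^2) * t ^ (q-3)) = fun _ => 0 := by
        funext t; rw [← h0]; ring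
      have eφ : φ x = fun _ => 0 := by
        funext t; simp only [hφ]; rw [← ha, e1, e2]; simp
      rw [eφ]
      constructor
      · simp [MeasureTheory.IntegrableOn]
      · rw [← h0, Real.zero_rpow (by linarith)]
        simp
    · -- a > 0
      have hsub1 : Set.Ioo (0:ℝ) a ⊆ Set.Ioi 0 := fun t ht => ht.1
      have hsub2 : Set.Ici a ∩ Set.Ioi 0 ⊆ Set.Ioi (0:ℝ) := fun t ht => ht.2
      have hIci : Set.Ici a ∩ Set.Ioi 0 = Set.Ici a :=
        Set.inter_eq_self_of_subset_left (fun t ht => lt_of_lt_of_le h0 ht)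
      have hint1 := my_indicator_int measurableSet_Ioo hsub1
        (fun t => (2*c₁*a) * t ^ (q-2))
        (((my_integrableOn_rpow_Ioo (q-2) a (by linarith))).const_mul (2*c₁*a))
      have hint2base : MeasureTheory.IntegrableOn (fun t : ℝ => (4*c₂*a^2) * t ^ (q-3))
          (Set.Ici a ∩ Set.Ioi 0) := by
        rw [hIci, integrableOn_Ici_iff_integrableOn_Ioi]
        exact (integrableOn_Ioi_rpow_of_lt (by linarith) h0).const_mul _
      have hint2 := my_indicator_int (measurableSet_Ici.inter measurableSet_Ioi) hsub2
        (fun t => (4*c₂*a^2) * t ^ (q-3)) hint2base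
      constructor
      · exact hint1.1.add hint2.1
      · have v1 : ∫ t in Set.Ioo 0 a, (2*c₁*a) * t ^ (q-2) = (2*c₁*a) * (a ^ (q-1) / (q-1)) := by
          rw [MeasureTheory.integral_const_mul, my_integral_rpow_Ioo (q-2) a (by linarith) h0.le,
            show q-2+1 = q-1 by ring]
        have v2 : ∫ t in Set.Ici a ∩ Set.Ioi 0, (4*c₂*a^2) * t ^ (q-3)
            = (4*c₂*a^2) * (-a ^ (q-2) / (q-2)) := by
          rw [hIci, MeasureTheory.integral_Ici_eq_integral_Ioi,
            MeasureTheory.integral_const_mul, integral_Ioi_rpow_of_lt (by linarith) h0,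
            show q-3+1 = q-2 by ring]
        have e1 : a * a ^ (q-1) = a ^ q := by
          rw [mul_comm, ← Real.rpow_add_one (ne_of_gt h0), show q-1+1 = q by ring]
        have e2 : a ^ 2 * a ^ (q-2) = a ^ q := by
          rw [← Real.rpow_natCast a 2, ← Real.rpow_add h0,
            show ((2:ℕ):ℝ) + (q-2) = q by push_cast; ring]
        have key : ∫ t in Set.Ioi 0, φ x t = (∫ t in Set.Ioi 0,
              (Set.Ioo 0 a).indicator (fun t => (2*c₁*a) * t ^ (q-2)) t)
            + ∫ t in Set.Ioi 0,
              (Set.Ici a ∩ Set.Ioi 0).indicator (fun t => (4*c₂*a^2) * t ^ (q-3)) t := by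
          rw [hφ]
          exact MeasureTheory.integral_add hint1.1 hint2.1
        have w1 : (2*c₁*a) * (a ^ (q-1) / (q-1)) = 2*c₁/(q-1) * (a * a^(q-1)) := by ring
        have wd : -a ^ (q-2) / (q-2) = a ^ (q-2) / (2-q) := by
          rw [div_eq_div_iff hq2' h2q]; ring
        have w2 : (4*c₂*a^2) * (a ^ (q-2) / (2-q)) = 4*c₂/(2-q) * (a^2 * a^(q-2)) := by ring
        rw [key, hint1.2, hint2.2, v1, v2, w1, e1, wd, w2, e2]
        ring
  -- cardinality as a filtered sum
  have hNcard : ∀ (h : T → V) (t : ℝ),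
      (Nat.card {x : T | t < ‖h x‖} : ℝ) = ((univ.filter fun x => t < ‖h x‖).card : ℝ) := by
    intro h t
    rw [Nat.card_coe_set_eq, Set.ncard_eq_toFinset_card']
    congr 2
    ext y
    simp
  -- pointwise bound
  have hpt : ∀ t ∈ Set.Ioi (0:ℝ), (∑ x : T, ψ x t) ≤ ∑ x : T, φ x t := by
    intro t ht
    rw [Set.mem_Ioi] at ht
    have tne : t ≠ 0 := ne_of_gt ht
    have ht2 : 0 < t/2 := by linarith
    set f₁ : T → V := fun x => if t < ‖f x‖ then f x else 0 with hf₁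
    set f₂ : T → V := fun x => if t < ‖f x‖ then 0 else f x with hf₂
    have hadd : f₁ + f₂ = f := by
      funext x; by_cases h : t < ‖f x‖ <;> simp [hf₁, hf₂, h]
    have hsubset : {x : T | t < ‖S f x‖} ⊆ {x | t/2 < ‖S f₁ x‖} ∪ {x | t/2 < ‖S f₂ x‖} := by
      intro x hx
      by_contra hcon
      simp only [Set.mem_union, Set.mem_setOf_eq, not_or, not_lt] at hcon
      have hSx : S f x = S f₁ x + S f₂ x := by
        conv_lhs => rw [← hadd]
        rw [map_add]
        rfl
      have htri := norm_add_le (S f₁ x) (S f₂ x)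
      rw [← hSx] at htri
      have hx' : t < ‖S f x‖ := hx
      linarith [hcon.1, hcon.2]
    have hcard : (Nat.card {x : T | t < ‖S f x‖} : ℝ)
        ≤ (Nat.card {x : T | t/2 < ‖S f₁ x‖} : ℝ) + (Nat.card {x : T | t/2 < ‖S f₂ x‖} : ℝ) := by
      rw [Nat.card_coe_set_eq, Nat.card_coe_set_eq, Nat.card_coe_set_eq]
      exact_mod_cast (Set.ncard_le_ncard hsubset (Set.toFinite _)).trans
        (Set.ncard_union_le _ _)
    have hN : (Nat.card {x : T | t < ‖S f x‖} : ℝ)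
        ≤ c₁ * (∑ x : T, ‖f₁ x‖) / (t/2) + c₂ * (∑ x : T, ‖f₂ x‖^2) / (t/2)^2 :=
      hcard.trans (add_le_add (h1 f₁ (t/2) ht2) (h2 f₂ (t/2) ht2))
    -- LHS identity
    have hL : (∑ x : T, ψ x t) = t^(q-1) * (Nat.card {x : T | t < ‖S f x‖} : ℝ) := by
      rw [hNcard]
      have hx : ∀ x : T, ψ x t = if t < ‖S f x‖ then t^(q-1) else 0 := by
        intro x
        by_cases h : t < ‖S f x‖ <;> simp [hψ, Set.indicator_apply, Set.mem_Ioo, ht, h]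
      rw [Finset.sum_congr rfl fun x _ => hx x, Finset.sum_ite, Finset.sum_const,
        Finset.sum_const_zero, add_zero, nsmul_eq_mul]
      ring
    -- RHS identity
    have hφt : ∀ x : T, φ x t = (2*c₁*t^(q-2)) * ‖f₁ x‖ + (4*c₂*t^(q-3)) * ‖f₂ x‖^2 := by
      intro x
      by_cases h : t < ‖f x‖
      · have h' : ¬ (‖f x‖ ≤ t) := not_le.mpr h
        simp only [hφ, hf₁, hf₂, Set.indicator_apply, Set.mem_Ioo, Set.mem_inter_iff,
          Set.mem_Ici, Set.mem_Ioi, ht, h, h', if_true, if_false, true_and, and_true,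
          and_false, false_and, norm_zero]
        ring
      · have h' : ‖f x‖ ≤ t := not_lt.mp h
        simp only [hφ, hf₁, hf₂, Set.indicator_apply, Set.mem_Ioo, Set.mem_inter_iff,
          Set.mem_Ici, Set.mem_Ioi, ht, h, h', if_true, if_false, true_and, and_true,
          and_false, false_and, norm_zero]
        ring
    have hR : (∑ x : T, φ x t)
        = (2*c₁*t^(q-2)) * (∑ x : T, ‖f₁ x‖) + (4*c₂*t^(q-3)) * (∑ x : T, ‖f₂ x‖^2) := by
      rw [Finset.sum_congr rfl fun x _ => hφt x, Finset.sum_add_distrib,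
        ← Finset.mul_sum, ← Finset.mul_sum]
    have d1 : t^(q-2) = t^(q-3) * t := by
      rw [← Real.rpow_add_one tne, show q-3+1 = q-2 by ring]
    have d2 : t^(q-1) = t^(q-3) * t * t := by
      rw [← Real.rpow_add_one tne, ← Real.rpow_add_one tne, show q-3+1+1 = q-1 by ring]
    have heq : t^(q-1) * (c₁ * (∑ x : T, ‖f₁ x‖) / (t/2) + c₂ * (∑ x : T, ‖f₂ x‖^2) / (t/2)^2)
        = (2*c₁*t^(q-2)) * (∑ x : T, ‖f₁ x‖) + (4*c₂*t^(q-3)) * (∑ x : T, ‖f₂ x‖^2) := by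
      rw [d1, d2]
      field_simp
      ring
    calc (∑ x : T, ψ x t) = t^(q-1) * (Nat.card {x : T | t < ‖S f x‖} : ℝ) := hL
      _ ≤ t^(q-1) * (c₁ * (∑ x : T, ‖f₁ x‖) / (t/2) + c₂ * (∑ x : T, ‖f₂ x‖^2) / (t/2)^2) :=
          mul_le_mul_of_nonneg_left hN (Real.rpow_nonneg ht.le _)
      _ = ∑ x : T, φ x t := by rw [heq, hR]
  -- assemble
  have hψsum : MeasureTheory.IntegrableOn (fun t => ∑ x : T, ψ x t) (Set.Ioi 0) :=
    MeasureTheory.integrable_finset_sum _ (fun x _ => (hψint x).1)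
  have hφsum : MeasureTheory.IntegrableOn (fun t => ∑ x : T, φ x t) (Set.Ioi 0) :=
    MeasureTheory.integrable_finset_sum _ (fun x _ => (hφint x).1)
  have hle := MeasureTheory.setIntegral_mono_on hψsum hφsum measurableSet_Ioi hpt
  rw [MeasureTheory.integral_finset_sum _ (fun x _ => (hψint x).1),
    MeasureTheory.integral_finset_sum _ (fun x _ => (hφint x).1)] at hle
  have hle2 : (∑ x : T, ‖S f x‖^q / q) ≤ ∑ x : T, (2*c₁/(q-1) + 4*c₂/(2-q)) * ‖f x‖^q := by
    calc (∑ x : T, ‖S f x‖^q / q) = ∑ x : T, ∫ t in Set.Ioi 0, ψ x t :=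
          Finset.sum_congr rfl fun x _ => ((hψint x).2).symm
      _ ≤ ∑ x : T, ∫ t in Set.Ioi 0, φ x t := hle
      _ = _ := Finset.sum_congr rfl fun x _ => (hφint x).2
  have hmul := mul_le_mul_of_nonneg_left hle2 hq0.le
  calc (∑ x : T, ‖S f x‖^q) = q * ∑ x : T, ‖S f x‖^q / q := by
        rw [Finset.mul_sum]
        exact Finset.sum_congr rfl fun x _ => by field_simp
    _ ≤ q * ∑ x : T, (2*c₁/(q-1) + 4*c₂/(2-q)) * ‖f x‖^q := hmul
    _ = q * (2*c₁/(q-1) + 4*c₂/(2-q)) * ∑ x : T, ‖f x‖^q := by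
        rw [← Finset.mul_sum, mul_assoc]
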